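/- Let K be a nonempty compact Hausdorff space which admits a Cantor scheme of clopen subsets of K (with A [] = Set.univ). Then for every nonempty compact set L ⊆ ℝ there exists a continuous function f ∈ C(K, ℝ) with Set.range f = L. -/

import Mathlib

/-- A Cantor scheme of clopen subsets of `X ⊆ K`: a family of nonempty clopen subsets of `K`
indexed by finite 0-1 sequences, with `A [] = X`, decreasing along extensions, and with the two
immediate successors of each node disjoint. -/
def IsClopenCantorScheme {K : Type*} [TopologicalSpace K] (X : Set K)
    (A : List Bool → Set K) : Prop :=
  A [] = X ∧ (∀ s, (A s).Nonempty) ∧ (∀ s, IsClopen (A s)) ∧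
    (∀ (s : List Bool) (i : Bool), A (s ++ [i]) ⊆ A s) ∧
    ∀ s : List Bool, A (s ++ [false]) ∩ A (s ++ [true]) = ∅


open scoped Classical

namespace Stmt1Aux

variable {K : Type*} [TopologicalSpace K]

/-- Modified scheme: `E A r` for a reversed index list `r`. -/
def E (A : List Bool → Set K) : List Bool → Set K
  | [] => Set.univ
  | (true :: r) => A (r.reverse ++ [true])
  | (false :: r) => E A r \ A (r.reverse ++ [true])

lemma subE {A : List Bool → Set K} (h0 : A [] = Set.univ)
    (hsub : ∀ (s : List Bool) (i : Bool), A (s ++ [i]) ⊆ A s)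
    (hdisj : ∀ s : List Bool, A (s ++ [false]) ∩ A (s ++ [true]) = ∅) :
    ∀ r : List Bool, A r.reverse ⊆ E A r := by
  intro r
  induction r with
  | nil => simp [E, h0]
  | cons i r ih =>
    cases i with
    | true => simp [E]
    | false =>
      simp only [E, List.reverse_cons]
      intro x hx
      refine ⟨ih (hsub r.reverse false hx), fun hx' => ?_⟩
      have hd := hdisj r.reverse
      have : x ∈ A (r.reverse ++ [false]) ∩ A (r.reverse ++ [true]) := ⟨hx, hx'⟩
      rw [hd] at this
      exact this

lemma clopenE {A : List Bool → Set K} (hclopen : ∀ s, IsClopen (A s)) :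
    ∀ r : List Bool, IsClopen (E A r) := by
  intro r
  induction r with
  | nil => exact isClopen_univ
  | cons i r ih =>
    cases i with
    | true => exact hclopen _
    | false => exact ih.diff (hclopen _)

lemma neE {A : List Bool → Set K} (h0 : A [] = Set.univ) (hne : ∀ s, (A s).Nonempty)
    (hsub : ∀ (s : List Bool) (i : Bool), A (s ++ [i]) ⊆ A s)
    (hdisj : ∀ s : List Bool, A (s ++ [false]) ∩ A (s ++ [true]) = ∅)
    (r : List Bool) : (E A r).Nonempty :=
  (hne r.reverse).mono (subE h0 hsub hdisj r)

lemma consE_subset {A : List Bool → Set K} (h0 : A [] = Set.univ)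
    (hsub : ∀ (s : List Bool) (i : Bool), A (s ++ [i]) ⊆ A s)
    (hdisj : ∀ s : List Bool, A (s ++ [false]) ∩ A (s ++ [true]) = ∅)
    (i : Bool) (r : List Bool) : E A (i :: r) ⊆ E A r := by
  cases i with
  | true =>
    intro x hx
    exact subE h0 hsub hdisj r (hsub r.reverse true hx)
  | false => exact Set.diff_subset

lemma uniqE {A : List Bool → Set K} (h0 : A [] = Set.univ)
    (hsub : ∀ (s : List Bool) (i : Bool), A (s ++ [i]) ⊆ A s)
    (hdisj : ∀ s : List Bool, A (s ++ [false]) ∩ A (s ++ [true]) = ∅) :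
    ∀ (r r' : List Bool), r.length = r'.length →
    ∀ x : K, x ∈ E A r → x ∈ E A r' → r = r' := by
  intro r
  induction r with
  | nil =>
    intro r' h x _ _
    cases r' with
    | nil => rfl
    | cons j s => simp at h
  | cons i r ih =>
    intro r' h x hx hx'
    cases r' with
    | nil => simp at h
    | cons j s =>
      have hl : r.length = s.length := by simpa using h
      have hrs : r = s :=
        ih s hl x (consE_subset h0 hsub hdisj i r hx) (consE_subset h0 hsub hdisj j s hx')
      subst hrs
      cases i <;> cases j
      · rfl
      · exact absurd hx' hx.2
      · exact absurd hx hx'.2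
      · rfl

/-- Branch of a point. -/
noncomputable def rho (A : List Bool → Set K) (x : K) : ℕ → List Bool
  | 0 => []
  | n + 1 => (if x ∈ A ((rho A x n).reverse ++ [true]) then true else false) :: rho A x n

lemma rho_len (A : List Bool → Set K) (x : K) : ∀ n, (rho A x n).length = n := by
  intro n
  induction n with
  | zero => rfl
  | succ n ih => simp [rho, ih]

lemma mem_rho {A : List Bool → Set K} (x : K) : ∀ n, x ∈ E A (rho A x n) := by
  intro n
  induction n with
  | zero => exact Set.mem_univ x
  | succ n ih =>
    by_cases h : x ∈ A ((rho A x n).reverse ++ [true])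
    · show x ∈ E A (rho A x (n + 1))
      simp only [rho, if_pos h]
      exact h
    · show x ∈ E A (rho A x (n + 1))
      simp only [rho, if_neg h]
      exact ⟨ih, h⟩

/-- Bisection scheme on `L ⊆ ℝ`. -/
noncomputable def J (L : Set ℝ) : List Bool → Set ℝ
  | [] => L
  | (false :: r) => J L r ∩ Set.Iic ((sInf (J L r) + sSup (J L r)) / 2)
  | (true :: r) => J L r ∩ Set.Ici ((sInf (J L r) + sSup (J L r)) / 2)

variable {L : Set ℝ}

lemma compactJ (hL : IsCompact L) : ∀ r, IsCompact (J L r) := by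
  intro r
  induction r with
  | nil => exact hL
  | cons i r ih =>
    cases i with
    | true => exact ih.inter_right isClosed_Ici
    | false => exact ih.inter_right isClosed_Iic

lemma neJ (hL : IsCompact L) (hLne : L.Nonempty) : ∀ r, (J L r).Nonempty := by
  intro r
  induction r with
  | nil => exact hLne
  | cons i r ih =>
    have hc := compactJ hL r
    have hle : sInf (J L r) ≤ sSup (J L r) := csInf_le hc.bddBelow (hc.sSup_mem ih)
    cases i with
    | false =>
      exact ⟨sInf (J L r), hc.sInf_mem ih, by simp only [Set.mem_Iic]; linarith⟩
    | true =>
      exact ⟨sSup (J L r), hc.sSup_mem ih, by simp only [Set.mem_Ici]; linarith⟩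

lemma subJ (i : Bool) (r : List Bool) : J L (i :: r) ⊆ J L r := by
  cases i <;> exact Set.inter_subset_left

lemma mem_boundJ (hL : IsCompact L) {r : List Bool} {y z : ℝ}
    (hy : y ∈ J L r) (hz : z ∈ J L r) : |y - z| ≤ sSup (J L r) - sInf (J L r) := by
  have hc := compactJ hL r
  have h1 := csInf_le hc.bddBelow hy
  have h2 := le_csSup hc.bddAbove hy
  have h3 := csInf_le hc.bddBelow hz
  have h4 := le_csSup hc.bddAbove hz
  rw [abs_sub_le_iff]
  constructor <;> linarith

lemma diamJ (hL : IsCompact L) (hLne : L.Nonempty) : ∀ r : List Bool,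
    sSup (J L r) - sInf (J L r) ≤ (sSup L - sInf L) / 2 ^ r.length := by
  intro r
  induction r with
  | nil => simp [J]
  | cons i r ih =>
    have hc := compactJ hL r
    have step : sSup (J L (i :: r)) - sInf (J L (i :: r)) ≤
        (sSup (J L r) - sInf (J L r)) / 2 := by
      cases i with
      | false =>
        have h1 : sSup (J L (false :: r)) ≤ (sInf (J L r) + sSup (J L r)) / 2 :=
          csSup_le (neJ hL hLne _) fun y hy => hy.2
        have h2 : sInf (J L r) ≤ sInf (J L (false :: r)) :=
          le_csInf (neJ hL hLne _) fun y hy => csInf_le hc.bddBelow hy.1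
        linarith
      | true =>
        have h1 : sSup (J L (true :: r)) ≤ sSup (J L r) :=
          csSup_le (neJ hL hLne _) fun y hy => le_csSup hc.bddAbove hy.1
        have h2 : (sInf (J L r) + sSup (J L r)) / 2 ≤ sInf (J L (true :: r)) :=
          le_csInf (neJ hL hLne _) fun y hy => hy.2
        linarith
    calc sSup (J L (i :: r)) - sInf (J L (i :: r)) ≤ (sSup (J L r) - sInf (J L r)) / 2 := step
      _ ≤ ((sSup L - sInf L) / 2 ^ r.length) / 2 := by linarith
      _ = (sSup L - sInf L) / 2 ^ (i :: r).length := by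
          rw [div_div, List.length_cons, pow_succ]

/-- Branch of a real number target. -/
noncomputable def tau (L : Set ℝ) (y : ℝ) : ℕ → List Bool
  | 0 => []
  | n + 1 =>
    (if y ≤ (sInf (J L (tau L y n)) + sSup (J L (tau L y n))) / 2 then false else true)
      :: tau L y n

lemma tau_len (L : Set ℝ) (y : ℝ) : ∀ n, (tau L y n).length = n := by
  intro n
  induction n with
  | zero => rfl
  | succ n ih => simp [tau, ih]

lemma mem_tau {y : ℝ} (hy : y ∈ L) : ∀ n, y ∈ J L (tau L y n) := by
  intro n
  induction n with
  | zero => exact hy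
  | succ n ih =>
    by_cases h : y ≤ (sInf (J L (tau L y n)) + sSup (J L (tau L y n))) / 2
    · show y ∈ J L (tau L y (n + 1))
      simp only [tau, if_pos h]
      exact ⟨ih, h⟩
    · show y ∈ J L (tau L y (n + 1))
      simp only [tau, if_neg h]
      exact ⟨ih, le_of_lt (not_le.mp h)⟩

end Stmt1Aux

open Stmt1Aux in
/-- If a nonempty compact Hausdorff space `K` admits a Cantor scheme of clopen
subsets (with `A [] = univ`), then every nonempty compact `L ⊆ ℝ` is the range of some
continuous `f : K → ℝ`. -/
theorem stmt1 {K : Type*} [TopologicalSpace K] [CompactSpace K] [T2Space K] [Nonempty K]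
    (A : List Bool → Set K) (hA : IsClopenCantorScheme Set.univ A)
    (L : Set ℝ) (hL : IsCompact L) (hLne : L.Nonempty) :
    ∃ f : C(K, ℝ), Set.range f = L := by
  classical
  obtain ⟨h0, hne, hclopen, hsub, hdisj⟩ := hA
  set D := sSup L - sInf L with hD
  have hlim : Filter.Tendsto (fun n : ℕ => D * (1 / 2 : ℝ) ^ n) Filter.atTop (nhds 0) := by
    simpa using
      (tendsto_pow_atTop_nhds_zero_of_lt_one (by norm_num : (0:ℝ) ≤ 1/2)
        (by norm_num : (1/2 : ℝ) < 1)).const_mul D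
  have hdiv : ∀ n : ℕ, D / 2 ^ n = D * (1 / 2) ^ n := by
    intro n
    rw [div_eq_mul_inv, one_div, inv_pow]
  -- the intersection of the target sets along the branch of x is nonempty
  have hTne : ∀ x : K, (⋂ n, J L (rho A x n)).Nonempty := by
    intro x
    apply IsCompact.nonempty_iInter_of_sequence_nonempty_isCompact_isClosed
    · intro n
      exact subJ _ _
    · intro n
      exact neJ hL hLne _
    · exact compactJ hL _
    · intro n
      exact (compactJ hL _).isClosed
  set f : K → ℝ := fun x => sSup (⋂ n, J L (rho A x n)) with hf
  have hfmem : ∀ x, f x ∈ ⋂ n, J L (rho A x n) := by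
    intro x
    have hsubL : (⋂ n, J L (rho A x n)) ⊆ L :=
      Set.iInter_subset (fun n => J L (rho A x n)) 0
    exact ((IsCompact.of_isClosed_subset hL
      (isClosed_iInter fun n => (compactJ hL _).isClosed) hsubL)).sSup_mem (hTne x)
  have key : ∀ (x : K) (n : ℕ) (y : ℝ), y ∈ J L (rho A x n) → |f x - y| ≤ D / 2 ^ n := by
    intro x n y hy
    have h1 := mem_boundJ hL (Set.mem_iInter.mp (hfmem x) n) hy
    have h2 := diamJ hL hLne (rho A x n)
    rw [rho_len] at h2
    exact h1.trans h2
  have contF : ∀ n : ℕ, Continuous fun x => sSup (J L (rho A x n)) := by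
    intro n
    have hlc : IsLocallyConstant fun x : K => rho A x n := by
      rw [IsLocallyConstant.iff_exists_open]
      intro x
      refine ⟨E A (rho A x n), (clopenE hclopen _).isOpen, mem_rho x n, fun y hy => ?_⟩
      exact uniqE h0 hsub hdisj _ _ (by rw [rho_len, rho_len]) y (mem_rho y n) hy
    exact (hlc.comp fun r => sSup (J L r)).continuous
  have htend : TendstoUniformly (fun n x => sSup (J L (rho A x n))) f Filter.atTop := by
    rw [Metric.tendstoUniformly_iff]
    intro ε hε
    filter_upwards [hlim.eventually (gt_mem_nhds hε)] with n hn x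
    have hy : sSup (J L (rho A x n)) ∈ J L (rho A x n) :=
      (compactJ hL _).sSup_mem (neJ hL hLne _)
    rw [Real.dist_eq]
    calc |f x - sSup (J L (rho A x n))| ≤ D / 2 ^ n := key x n _ hy
      _ = D * (1 / 2) ^ n := hdiv n
      _ < ε := hn
  have hcont : Continuous f := htend.continuous (Filter.Eventually.of_forall contF).frequently
  refine ⟨⟨f, hcont⟩, Set.Subset.antisymm ?_ ?_⟩
  · rintro _ ⟨x, rfl⟩
    exact Set.mem_iInter.mp (hfmem x) 0
  · intro y hy
    have hXne : (⋂ n, E A (tau L y n)).Nonempty := by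
      apply IsCompact.nonempty_iInter_of_sequence_nonempty_isCompact_isClosed
      · intro n
        exact consE_subset h0 hsub hdisj _ _
      · intro n
        exact neE h0 hne hsub hdisj _
      · exact (clopenE hclopen _).isClosed.isCompact
      · intro n
        exact (clopenE hclopen _).isClosed
    obtain ⟨x, hx⟩ := hXne
    have hbranch : ∀ n, rho A x n = tau L y n := fun n =>
      uniqE h0 hsub hdisj _ _ (by rw [rho_len, tau_len]) x (mem_rho x n)
        (Set.mem_iInter.mp hx n)
    refine ⟨x, ?_⟩
    have hbd : ∀ n : ℕ, |f x - y| ≤ D * (1 / 2) ^ n := by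
      intro n
      have h1 : y ∈ J L (rho A x n) := by rw [hbranch n]; exact mem_tau hy n
      rw [← hdiv n]
      exact key x n y h1
    have hle : |f x - y| ≤ 0 :=
      ge_of_tendsto hlim (Filter.Eventually.of_forall hbd)
    have : f x - y = 0 := abs_nonpos_iff.mp hle
    exact sub_eq_zero.mp this
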